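/- Let γ > 0, μ₀ > 0, a ∈ (0, 1/2), t ∈ (0, μ₀/(2γ)), and μ < μ₀ - γt. Then ∫₀^t (t-s)^{-1/2} (μ₀ - μ - γs)^{-(1+a)} ds ≤ C γ^{-1/2} (μ₀ - μ - γt)^{-(1/2+a)} for a constant C depending only on a. -/

import Mathlib

open intervalIntegral MeasureTheory Set

theorem trace_kernel_time_integral (a : ℝ) (ha0 : 0 < a) (ha : a < 1 / 2) :
    ∃ C : ℝ, 0 < C ∧ ∀ γ μ₀ t μ : ℝ, 0 < γ → 0 < μ₀ → 0 < t → t < μ₀ / (2 * γ) →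
      μ < μ₀ - γ * t →
      ∫ s in (0 : ℝ)..t, (t - s) ^ (-(1 / 2) : ℝ) * (μ₀ - μ - γ * s) ^ (-(1 + a) : ℝ) ≤
        C * γ ^ (-(1 / 2) : ℝ) * (μ₀ - μ - γ * t) ^ (-(1 / 2 + a) : ℝ) := by
  refine ⟨2 + 1 / (1/2 + a), by positivity, ?_⟩
  intro γ μ₀ t μ hγ hμ₀ ht _ hμ
  set d : ℝ := μ₀ - μ - γ * t with hd_def
  have hd : 0 < d := by simp only [hd_def]; linarith
  set D : ℝ := d / γ with hD_def
  have hD0 : 0 < D := div_pos hd hγ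
  set T : ℝ := max t D with hT_def
  have htT : t ≤ T := le_max_left _ _
  have hDT : D ≤ T := le_max_right _ _
  have hT0 : 0 < T := lt_of_lt_of_le ht htT
  set f : ℝ → ℝ := fun τ => τ ^ (-(1/2) : ℝ) * (d + γ * τ) ^ (-(1+a) : ℝ) with hf_def
  -- step 1 : rewrite the integral
  have hrw : (∫ s in (0:ℝ)..t, (t - s) ^ (-(1/2) : ℝ) * (μ₀ - μ - γ * s) ^ (-(1+a) : ℝ))
      = ∫ τ in (0:ℝ)..t, f τ := by
    have h1 : (∫ s in (0:ℝ)..t, (t - s) ^ (-(1/2) : ℝ) * (μ₀ - μ - γ * s) ^ (-(1+a) : ℝ))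
        = ∫ s in (0:ℝ)..t, f (t - s) := by
      refine intervalIntegral.integral_congr fun s _ => ?_
      simp only [hf_def]
      have : μ₀ - μ - γ * s = d + γ * (t - s) := by simp only [hd_def]; ring
      rw [this]
    rw [h1]
    have := intervalIntegral.integral_comp_sub_left (a := (0:ℝ)) (b := t) f t
    simpa using this
  rw [hrw]
  -- continuity of f on (0, T]
  have hcont : ContinuousOn f (Ioc 0 T) := by
    apply ContinuousOn.mul
    · exact continuousOn_id.rpow_const fun x hx => Or.inl (ne_of_gt hx.1)
    · refine (continuousOn_const.add (continuousOn_const.mul continuousOn_id)).rpow_const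
        fun x hx => Or.inl ?_
      have := hx.1
      exact (show (0:ℝ) < d + γ * x by nlinarith [mul_pos hγ this]).ne'
  -- integrability of f on [0, T]
  have hint : IntervalIntegrable f volume 0 T := by
    apply IntervalIntegrable.mono_fun'
      (g := fun τ : ℝ => d ^ (-(1+a) : ℝ) * τ ^ (-(1/2) : ℝ))
    · exact (intervalIntegrable_rpow' (by norm_num)).const_mul _
    · rw [uIoc_of_le hT0.le]
      exact hcont.aestronglyMeasurable measurableSet_Ioc
    · rw [uIoc_of_le hT0.le]
      filter_upwards [ae_restrict_mem measurableSet_Ioc] with x hx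
      have hx0 : 0 < x := hx.1
      have h1 : 0 ≤ f x :=
        mul_nonneg (Real.rpow_nonneg hx0.le _) (Real.rpow_nonneg (by positivity) _)
      rw [Real.norm_of_nonneg h1]
      have h2 : (d + γ * x) ^ (-(1+a) : ℝ) ≤ d ^ (-(1+a) : ℝ) :=
        Real.rpow_le_rpow_of_nonpos hd (by nlinarith) (by linarith)
      calc f x ≤ x ^ (-(1/2) : ℝ) * d ^ (-(1+a) : ℝ) :=
            mul_le_mul_of_nonneg_left h2 (Real.rpow_nonneg hx0.le _)
        _ = d ^ (-(1+a) : ℝ) * x ^ (-(1/2) : ℝ) := mul_comm _ _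
  have h0D : IntervalIntegrable f volume 0 D :=
    hint.mono_set (by rw [uIcc_of_le hD0.le, uIcc_of_le hT0.le]; exact Icc_subset_Icc le_rfl hDT)
  have hDTi : IntervalIntegrable f volume D T :=
    hint.mono_set (by rw [uIcc_of_le hDT, uIcc_of_le hT0.le]; exact Icc_subset_Icc hD0.le le_rfl)
  -- extend from [0,t] to [0,T]
  have hstep1 : (∫ τ in (0:ℝ)..t, f τ) ≤ ∫ τ in (0:ℝ)..T, f τ := by
    apply intervalIntegral.integral_mono_interval le_rfl ht.le htT _ hint
    filter_upwards [ae_restrict_mem measurableSet_Ioc] with x hx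
    exact mul_nonneg (Real.rpow_nonneg hx.1.le _) (Real.rpow_nonneg (by nlinarith [hx.1]) _)
  -- split at D
  have hsplit : (∫ τ in (0:ℝ)..T, f τ) = (∫ τ in (0:ℝ)..D, f τ) + ∫ τ in D..T, f τ :=
    (intervalIntegral.integral_add_adjacent_intervals h0D hDTi).symm
  -- first piece
  have hpiece1 : (∫ τ in (0:ℝ)..D, f τ) ≤ 2 * γ ^ (-(1/2) : ℝ) * d ^ (-(1/2 + a) : ℝ) := by
    have hg1 : IntervalIntegrable (fun x : ℝ => d ^ (-(1+a):ℝ) * x ^ (-(1/2):ℝ)) volume 0 D :=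
      (intervalIntegrable_rpow' (by norm_num)).const_mul _
    have hmono : (∫ τ in (0:ℝ)..D, f τ)
        ≤ ∫ x in (0:ℝ)..D, d ^ (-(1+a):ℝ) * x ^ (-(1/2):ℝ) := by
      apply intervalIntegral.integral_mono_on hD0.le h0D hg1
      intro x hx
      rcases eq_or_lt_of_le hx.1 with h0 | hx0
      · simp [hf_def, ← h0, Real.zero_rpow (show (-(1/2):ℝ) ≠ 0 by norm_num)]
      · have h2 : (d + γ * x) ^ (-(1+a) : ℝ) ≤ d ^ (-(1+a) : ℝ) :=
          Real.rpow_le_rpow_of_nonpos hd (by nlinarith) (by linarith)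
        calc f x ≤ x ^ (-(1/2) : ℝ) * d ^ (-(1+a) : ℝ) := by
              rw [hf_def]
              exact mul_le_mul_of_nonneg_left h2 (Real.rpow_nonneg hx0.le _)
          _ = d ^ (-(1+a) : ℝ) * x ^ (-(1/2) : ℝ) := mul_comm _ _
    have hval : (∫ x in (0:ℝ)..D, d ^ (-(1+a):ℝ) * x ^ (-(1/2):ℝ))
        = d ^ (-(1+a):ℝ) * (2 * D ^ ((1/2):ℝ)) := by
      rw [intervalIntegral.integral_const_mul, integral_rpow (Or.inl (by norm_num))]
      norm_num
      exact Or.inl (by ring)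
    have halg : d ^ (-(1+a):ℝ) * (2 * D ^ ((1/2):ℝ))
        = 2 * γ ^ (-(1/2) : ℝ) * d ^ (-(1/2 + a) : ℝ) := by
      have h1 : d ^ (-(1+a):ℝ) * d ^ ((1/2):ℝ) = d ^ (-(1/2 + a) : ℝ) := by
        rw [← Real.rpow_add hd]; congr 1; ring
      rw [hD_def, Real.div_rpow hd.le hγ.le, Real.rpow_neg hγ.le, div_eq_mul_inv, ← h1]
      ring
    calc (∫ τ in (0:ℝ)..D, f τ) ≤ _ := hmono
      _ = _ := hval
      _ = _ := halg
  -- second piece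
  have hpiece2 : (∫ τ in D..T, f τ) ≤ (1/(1/2+a)) * γ ^ (-(1/2) : ℝ) * d ^ (-(1/2 + a) : ℝ) := by
    have h0not : (0:ℝ) ∉ Set.uIcc D T := by
      rw [uIcc_of_le hDT]
      exact fun h => absurd h.1 (not_le_of_gt hD0)
    have hg2 : IntervalIntegrable (fun x : ℝ => γ ^ (-(1+a):ℝ) * x ^ (-(3/2+a):ℝ)) volume D T :=
      (intervalIntegrable_rpow (Or.inr h0not)).const_mul _
    have hmono : (∫ τ in D..T, f τ) ≤ ∫ x in D..T, γ ^ (-(1+a):ℝ) * x ^ (-(3/2+a):ℝ) := by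
      apply intervalIntegral.integral_mono_on hDT hDTi hg2
      intro x hx
      have hx0 : 0 < x := lt_of_lt_of_le hD0 hx.1
      have h2 : (d + γ * x) ^ (-(1+a) : ℝ) ≤ (γ * x) ^ (-(1+a) : ℝ) :=
        Real.rpow_le_rpow_of_nonpos (by positivity) (by nlinarith) (by linarith)
      calc f x ≤ x ^ (-(1/2) : ℝ) * (γ * x) ^ (-(1+a) : ℝ) := by
            rw [hf_def]
            exact mul_le_mul_of_nonneg_left h2 (Real.rpow_nonneg hx0.le _)
        _ = γ ^ (-(1+a):ℝ) * x ^ (-(3/2+a):ℝ) := by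
            rw [Real.mul_rpow hγ.le hx0.le]
            rw [show x ^ (-(3/2+a):ℝ) = x ^ (-(1/2):ℝ) * x ^ (-(1+a):ℝ) by
              rw [← Real.rpow_add hx0]; congr 1; ring]
            ring
    have hval : (∫ x in D..T, γ ^ (-(1+a):ℝ) * x ^ (-(3/2+a):ℝ))
        = γ ^ (-(1+a):ℝ) * ((T ^ (-(1/2+a):ℝ) - D ^ (-(1/2+a):ℝ)) / (-(1/2+a))) := by
      rw [intervalIntegral.integral_const_mul,
        integral_rpow (Or.inr ⟨by intro h; linarith, h0not⟩)]
      rw [show (-(3/2+a) + 1 : ℝ) = -(1/2+a) by ring]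
    -- bound the bracket
    have hTpos : (0:ℝ) ≤ T ^ (-(1/2+a):ℝ) := Real.rpow_nonneg (le_trans hD0.le hDT) _
    have hDpow : (0:ℝ) < D ^ (-(1/2+a):ℝ) := Real.rpow_pos_of_pos hD0 _
    have hbr : (T ^ (-(1/2+a):ℝ) - D ^ (-(1/2+a):ℝ)) / (-(1/2+a))
        ≤ D ^ (-(1/2+a):ℝ) / (1/2+a) := by
      rw [show (T ^ (-(1/2+a):ℝ) - D ^ (-(1/2+a):ℝ)) / (-(1/2+a))
          = (D ^ (-(1/2+a):ℝ) - T ^ (-(1/2+a):ℝ)) / (1/2+a) by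
          rw [div_neg, ← neg_div, neg_sub]]
      exact (div_le_div_iff_of_pos_right (by linarith)).mpr (by linarith)
    -- algebra
    have hDpow' : D ^ (-(1/2+a):ℝ) = d ^ (-(1/2+a):ℝ) * γ ^ ((1/2+a):ℝ) := by
      rw [hD_def, Real.div_rpow hd.le hγ.le, Real.rpow_neg hγ.le, Real.rpow_neg hd.le,
        div_eq_mul_inv, inv_inv]
    have hγalg : γ ^ (-(1+a):ℝ) * γ ^ ((1/2+a):ℝ) = γ ^ (-(1/2):ℝ) := by
      rw [← Real.rpow_add hγ]; congr 1; ring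
    calc (∫ τ in D..T, f τ) ≤ _ := hmono
      _ = γ ^ (-(1+a):ℝ) * ((T ^ (-(1/2+a):ℝ) - D ^ (-(1/2+a):ℝ)) / (-(1/2+a))) := hval
      _ ≤ γ ^ (-(1+a):ℝ) * (D ^ (-(1/2+a):ℝ) / (1/2+a)) := by
          apply mul_le_mul_of_nonneg_left hbr (Real.rpow_nonneg hγ.le _)
      _ = (1/(1/2+a)) * γ ^ (-(1/2) : ℝ) * d ^ (-(1/2 + a) : ℝ) := by
          rw [hDpow', show γ ^ (-(1+a):ℝ) * (d ^ (-(1/2+a):ℝ) * γ ^ ((1/2+a):ℝ) / (1/2+a))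
            = (γ ^ (-(1+a):ℝ) * γ ^ ((1/2+a):ℝ)) * d ^ (-(1/2+a):ℝ) / (1/2+a) by ring, hγalg]
          ring
  calc (∫ τ in (0:ℝ)..t, f τ) ≤ ∫ τ in (0:ℝ)..T, f τ := hstep1
    _ = (∫ τ in (0:ℝ)..D, f τ) + ∫ τ in D..T, f τ := hsplit
    _ ≤ 2 * γ ^ (-(1/2) : ℝ) * d ^ (-(1/2 + a) : ℝ)
        + (1/(1/2+a)) * γ ^ (-(1/2) : ℝ) * d ^ (-(1/2 + a) : ℝ) := add_le_add hpiece1 hpiece2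
    _ = (2 + 1/(1/2+a)) * γ ^ (-(1/2) : ℝ) * d ^ (-(1/2 + a) : ℝ) := by ring
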